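/- Foster's theorem: in a connected unweighted graph on p vertices, the sum over all edges of the effective resistances equals p − 1: Σ_{e ∈ E} r_e = p − 1. -/

import Mathlib

open Matrix

private lemma foster_term {p : ℕ} (L : Matrix (Fin p) (Fin p) ℝ) (u v : Fin p) :
    (Pi.single u 1 - Pi.single v 1) ⬝ᵥ L.mulVec (Pi.single u 1 - Pi.single v 1)
      = L u u + L v v - L u v - L v u := by
  simp [sub_dotProduct, dotProduct_sub, mulVec_sub, single_dotProduct, Matrix.mulVec_single,
    Pi.sub_apply, MulOpposite.op_one]
  ring

private lemma foster_trace_eq_sum {p : ℕ} (G : SimpleGraph (Fin p)) [DecidableRel G.Adj]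
    (L : Matrix (Fin p) (Fin p) ℝ) :
    (G.lapMatrix ℝ * L).trace
      = ∑ u : Fin p, ∑ v : Fin p, (if G.Adj u v then L u u - L u v else 0) := by
  have hswap : ∑ u : Fin p, ∑ v : Fin p, (if G.Adj u v then L v u else 0)
      = ∑ u : Fin p, ∑ v : Fin p, (if G.Adj u v then L u v else 0) := by
    rw [Finset.sum_comm]
    simp_rw [G.adj_comm]
  simp_rw [Matrix.trace, Matrix.diag, Matrix.mul_apply, SimpleGraph.lapMatrix,
    Matrix.sub_apply, SimpleGraph.degMatrix, Matrix.diagonal_apply,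
    SimpleGraph.adjMatrix_apply, sub_mul, ite_mul, one_mul, zero_mul,
    Finset.sum_sub_distrib, Finset.sum_ite_eq, Finset.mem_univ, if_true]
  rw [hswap]
  rw [← Finset.sum_sub_distrib]
  congr 1; ext u
  rw [G.degree_eq_sum_if_adj (R := ℝ), Finset.sum_mul, ← Finset.sum_sub_distrib]
  congr 1; ext v
  by_cases h : G.Adj u v <;> simp [h]

private lemma foster_trace {p : ℕ} (G : SimpleGraph (Fin p)) [DecidableRel G.Adj]
    (hG : G.Connected) (L : Matrix (Fin p) (Fin p) ℝ)
    (h1 : G.lapMatrix ℝ * L * G.lapMatrix ℝ = G.lapMatrix ℝ) :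
    (G.lapMatrix ℝ * L).trace = (p : ℝ) - 1 := by
  classical
  set M := G.lapMatrix ℝ * L with hM
  have hidem : M * M = M := by
    rw [hM, ← Matrix.mul_assoc, h1]
  set f := Matrix.mulVecLin M with hf
  have hfidem : f ∘ₗ f = f := by
    rw [hf, ← Matrix.mulVecLin_mul, hidem]
  have hproj : LinearMap.IsProj (LinearMap.range f) f := by
    constructor
    · intro x; exact LinearMap.mem_range_self f x
    · rintro x ⟨y, rfl⟩
      exact congrFun (congrArg DFunLike.coe hfidem) y
  have htr : LinearMap.trace ℝ _ f = (Module.finrank ℝ (LinearMap.range f) : ℝ) :=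
    hproj.trace
  have hrank : Module.finrank ℝ (LinearMap.range f) = M.rank := rfl
  have hrk2 : M.rank = (G.lapMatrix ℝ).rank := by
    apply le_antisymm (Matrix.rank_mul_le_left _ _)
    conv_lhs => rw [← h1]
    exact Matrix.rank_mul_le_left _ _
  have hcard : Fintype.card G.ConnectedComponent = 1 := by
    have hs : Subsingleton G.ConnectedComponent := hG.preconnected.subsingleton_connectedComponent
    have : Nonempty (Fin p) := hG.nonempty
    exact Fintype.card_eq_one_iff.mpr
      ⟨G.connectedComponentMk this.some, fun c => Subsingleton.elim _ _⟩
  have hker : Module.finrank ℝ (LinearMap.ker (Matrix.toLin' (G.lapMatrix ℝ))) = 1 := by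
    rw [← G.card_connectedComponent_eq_finrank_ker_toLin'_lapMatrix, hcard]
  have hp : 1 ≤ p := by
    have : Nonempty (Fin p) := hG.nonempty
    simpa [Nat.succ_le_iff, Fin.pos_iff_nonempty] using this
  have hrkl : (G.lapMatrix ℝ).rank = p - 1 := by
    have hrn := LinearMap.finrank_range_add_finrank_ker (Matrix.toLin' (G.lapMatrix ℝ))
    rw [hker] at hrn
    have : (G.lapMatrix ℝ).rank
        = Module.finrank ℝ (LinearMap.range (Matrix.toLin' (G.lapMatrix ℝ))) := by
      rw [Matrix.rank_eq_finrank_range_toLin (G.lapMatrix ℝ) (Pi.basisFun ℝ (Fin p))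
        (Pi.basisFun ℝ (Fin p)), Matrix.toLin_eq_toLin']
    rw [Module.finrank_fintype_fun_eq_card, Fintype.card_fin] at hrn
    omega
  have hMtr : M.trace = LinearMap.trace ℝ _ f := by
    rw [hf, ← Matrix.toLin'_apply', LinearMap.trace_eq_matrix_trace ℝ (Pi.basisFun ℝ (Fin p)),
      LinearMap.toMatrix_eq_toMatrix', LinearMap.toMatrix'_toLin']
  rw [hMtr, htr, hrank, hrk2, hrkl, Nat.cast_sub hp, Nat.cast_one]

/-- Foster's theorem: in a connected unweighted graph on `p` vertices,
`Σ_{e ∈ E} r_e = p − 1`, where `r_{uv} = (δ_u − δ_v)^⊤ Δ† (δ_u − δ_v)` is the effective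
resistance (`Δ†` the Moore–Penrose pseudoinverse of the Laplacian, characterized by the
four Penrose conditions). Each edge is counted once (the ordered-pair sum is halved). -/
theorem foster {p : ℕ} (G : SimpleGraph (Fin p)) [DecidableRel G.Adj] (hG : G.Connected)
    (L : Matrix (Fin p) (Fin p) ℝ)
    (h1 : G.lapMatrix ℝ * L * G.lapMatrix ℝ = G.lapMatrix ℝ)
    (h2 : L * G.lapMatrix ℝ * L = L)
    (h3 : (G.lapMatrix ℝ * L)ᵀ = G.lapMatrix ℝ * L)
    (h4 : (L * G.lapMatrix ℝ)ᵀ = L * G.lapMatrix ℝ) :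
    (1 / 2) * ∑ u : Fin p, ∑ v : Fin p,
        (if G.Adj u v then
          (Pi.single u 1 - Pi.single v 1) ⬝ᵥ L.mulVec (Pi.single u 1 - Pi.single v 1)
        else 0)
      = (p : ℝ) - 1 := by
  have hsum : ∑ u : Fin p, ∑ v : Fin p,
      (if G.Adj u v then
          (Pi.single u 1 - Pi.single v 1) ⬝ᵥ L.mulVec (Pi.single u 1 - Pi.single v 1)
        else 0)
      = 2 * ∑ u : Fin p, ∑ v : Fin p, (if G.Adj u v then L u u - L u v else 0) := by
    have h2nd : ∑ u : Fin p, ∑ v : Fin p, (if G.Adj u v then L v v - L v u else 0)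
        = ∑ u : Fin p, ∑ v : Fin p, (if G.Adj u v then L u u - L u v else 0) := by
      rw [Finset.sum_comm]
      simp_rw [G.adj_comm]
    simp_rw [foster_term]
    have hsplit : ∀ u v : Fin p,
        (if G.Adj u v then L u u + L v v - L u v - L v u else 0)
          = (if G.Adj u v then L u u - L u v else 0)
            + (if G.Adj u v then L v v - L v u else 0) := by
      intro u v; split <;> ring
    simp_rw [hsplit, Finset.sum_add_distrib]
    rw [h2nd]; ring
  rw [hsum, ← foster_trace_eq_sum G L, foster_trace G hG L h1]
  ring
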